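/- arXiv:1812.07075 — 2 statements merged into one kernel-verified Lean document; each statement's English description precedes it below -/
import Mathlib

section
/- Let G be a finite simple graph and let e = uv be an edge of G. Let H be the graph obtained from G by deleting e, adding two new vertices u' and v', and adding the edges uu', u'v', v'v (a double subdivision of e). Then the minimum size of a vertex cover of H equals the minimum size of a vertex cover of G plus 1. -/
/-- A vertex cover: a set of vertices touching every edge. -/
def IsVCover {W : Type*} (G : SimpleGraph W) (S : Finset W) : Prop :=
  ∀ e ∈ G.edgeSet, ∃ w ∈ S, w ∈ e

/-- The graph obtained from `G` by a double subdivision of the edge `uv`: the edge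
`uv` is deleted, two new vertices `u' = inr 0` and `v' = inr 1` are added, together
with the edges `u—u'`, `u'—v'`, `v'—v`. -/
def doubleSubdiv {V : Type*} [DecidableEq V] (G : SimpleGraph V) (u v : V) :
    SimpleGraph (V ⊕ Fin 2) :=
  SimpleGraph.fromRel (fun x y =>
    match x, y with
    | Sum.inl a, Sum.inl b => G.Adj a b ∧ s(a, b) ≠ s(u, v)
    | Sum.inl a, Sum.inr i => (a = u ∧ i = 0) ∨ (a = v ∧ i = 1)
    | Sum.inr i, Sum.inr j => i = 0 ∧ j = 1
    | Sum.inr _, Sum.inl _ => False)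

section Aux
variable {V : Type*} [DecidableEq V] (G : SimpleGraph V) (u v : V)

lemma adj_ll {a b : V} : (doubleSubdiv G u v).Adj (Sum.inl a) (Sum.inl b) ↔
    G.Adj a b ∧ s(a, b) ≠ s(u, v) := by
  simp only [doubleSubdiv, SimpleGraph.fromRel_adj]
  constructor
  · rintro ⟨-, h | ⟨h1, h2⟩⟩
    · exact h
    · exact ⟨h1.symm, by rwa [Sym2.eq_swap]⟩
  · intro h
    exact ⟨by simp [h.1.ne], Or.inl h⟩

lemma adj_lr {a : V} {i : Fin 2} : (doubleSubdiv G u v).Adj (Sum.inl a) (Sum.inr i) ↔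
    (a = u ∧ i = 0) ∨ (a = v ∧ i = 1) := by
  simp only [doubleSubdiv, SimpleGraph.fromRel_adj]
  simp

lemma adj_rr {i j : Fin 2} : (doubleSubdiv G u v).Adj (Sum.inr i) (Sum.inr j) ↔
    (i = 0 ∧ j = 1) ∨ (i = 1 ∧ j = 0) := by
  simp only [doubleSubdiv, SimpleGraph.fromRel_adj]
  constructor
  · rintro ⟨hne, h | h⟩
    · exact Or.inl h
    · exact Or.inr ⟨h.2, h.1⟩
  · rintro (⟨h1, h2⟩ | ⟨h1, h2⟩) <;> subst h1 <;> subst h2 <;> simp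

lemma cover_u {S : Finset V} (hu : u ∈ S) (hS : IsVCover G S) :
    IsVCover (doubleSubdiv G u v) (insert (Sum.inr 1) (S.image Sum.inl)) := by
  intro e he
  induction e using Sym2.ind with
  | _ x y =>
    rw [SimpleGraph.mem_edgeSet] at he
    match x, y with
    | Sum.inl a, Sum.inl b =>
      rw [adj_ll] at he
      obtain ⟨w, hwS, hw⟩ := hS s(a, b) ((SimpleGraph.mem_edgeSet _).2 he.1)
      refine ⟨Sum.inl w, by simp [Finset.mem_insert, hwS], ?_⟩
      rw [Sym2.mem_iff] at hw ⊢
      rcases hw with h | h <;> simp [h]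
    | Sum.inl a, Sum.inr i =>
      rw [adj_lr] at he
      rcases he with ⟨ha, hi⟩ | ⟨ha, hi⟩
      · exact ⟨Sum.inl u, by simp [Finset.mem_insert, hu], by simp [ha]⟩
      · exact ⟨Sum.inr 1, by simp, by simp [hi]⟩
    | Sum.inr i, Sum.inl a =>
      rw [SimpleGraph.adj_comm, adj_lr] at he
      rcases he with ⟨ha, hi⟩ | ⟨ha, hi⟩
      · exact ⟨Sum.inl u, by simp [Finset.mem_insert, hu], by simp [ha]⟩
      · exact ⟨Sum.inr 1, by simp, by simp [hi]⟩
    | Sum.inr i, Sum.inr j =>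
      rw [adj_rr] at he
      rcases he with ⟨hi, hj⟩ | ⟨hi, hj⟩
      · exact ⟨Sum.inr 1, by simp, by simp [hj]⟩
      · exact ⟨Sum.inr 1, by simp, by simp [hi]⟩

lemma cover_v {S : Finset V} (hv : v ∈ S) (hS : IsVCover G S) :
    IsVCover (doubleSubdiv G u v) (insert (Sum.inr 0) (S.image Sum.inl)) := by
  intro e he
  induction e using Sym2.ind with
  | _ x y =>
    rw [SimpleGraph.mem_edgeSet] at he
    match x, y with
    | Sum.inl a, Sum.inl b =>
      rw [adj_ll] at he
      obtain ⟨w, hwS, hw⟩ := hS s(a, b) ((SimpleGraph.mem_edgeSet _).2 he.1)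
      refine ⟨Sum.inl w, by simp [Finset.mem_insert, hwS], ?_⟩
      rw [Sym2.mem_iff] at hw ⊢
      rcases hw with h | h <;> simp [h]
    | Sum.inl a, Sum.inr i =>
      rw [adj_lr] at he
      rcases he with ⟨ha, hi⟩ | ⟨ha, hi⟩
      · exact ⟨Sum.inr 0, by simp, by simp [hi]⟩
      · exact ⟨Sum.inl v, by simp [Finset.mem_insert, hv], by simp [ha]⟩
    | Sum.inr i, Sum.inl a =>
      rw [SimpleGraph.adj_comm, adj_lr] at he
      rcases he with ⟨ha, hi⟩ | ⟨ha, hi⟩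
      · exact ⟨Sum.inr 0, by simp, by simp [hi]⟩
      · exact ⟨Sum.inl v, by simp [Finset.mem_insert, hv], by simp [ha]⟩
    | Sum.inr i, Sum.inr j =>
      rw [adj_rr] at he
      rcases he with ⟨hi, hj⟩ | ⟨hi, hj⟩
      · exact ⟨Sum.inr 0, by simp, by simp [hi]⟩
      · exact ⟨Sum.inr 0, by simp, by simp [hj]⟩

end Aux

/-- the minimum size of a vertex cover of the double subdivision of an
edge `uv` of `G` equals the minimum size of a vertex cover of `G` plus 1. -/
theorem doubleSubdiv_minVC {V : Type*} [Fintype V] [DecidableEq V]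
    (G : SimpleGraph V) (u v : V) (huv : G.Adj u v) :
    sInf {m : ℕ | ∃ S : Finset (V ⊕ Fin 2),
        IsVCover (doubleSubdiv G u v) S ∧ S.card = m}
      = sInf {m : ℕ | ∃ S : Finset V, IsVCover G S ∧ S.card = m} + 1 := by
  have huniv : ∀ {W : Type} [Fintype W] (H : SimpleGraph W), IsVCover H Finset.univ := by
    intro W _ H e he
    induction e using Sym2.ind with
    | _ x y => exact ⟨x, Finset.mem_univ x, by simp⟩
  have hGne : {m : ℕ | ∃ S : Finset V, IsVCover G S ∧ S.card = m}.Nonempty :=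
    ⟨_, Finset.univ, fun e he => by
      induction e using Sym2.ind with
      | _ x y => exact ⟨x, Finset.mem_univ x, by simp⟩, rfl⟩
  have hHne : {m : ℕ | ∃ S : Finset (V ⊕ Fin 2),
      IsVCover (doubleSubdiv G u v) S ∧ S.card = m}.Nonempty :=
    ⟨_, Finset.univ, fun e he => by
      induction e using Sym2.ind with
      | _ x y => exact ⟨x, Finset.mem_univ x, by simp⟩, rfl⟩
  apply le_antisymm
  · -- sInf H ≤ kG + 1
    obtain ⟨S, hS, hcard⟩ := Nat.sInf_mem hGne
    obtain ⟨w, hwS, hw⟩ := hS s(u, v) ((SimpleGraph.mem_edgeSet _).2 huv)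
    rw [Sym2.mem_iff] at hw
    have hcard' : ∀ z : Fin 2, (insert (Sum.inr z) (S.image Sum.inl) : Finset (V ⊕ Fin 2)).card
        = S.card + 1 := by
      intro z
      rw [Finset.card_insert_of_notMem (by simp),
        Finset.card_image_of_injective _ Sum.inl_injective]
    rcases hw with h | h
    · subst h
      apply Nat.sInf_le
      exact ⟨_, cover_u G w v hwS hS, by rw [hcard' 1, hcard]⟩
    · subst h
      apply Nat.sInf_le
      exact ⟨_, cover_v G u w hwS hS, by rw [hcard' 0, hcard]⟩
  · -- kG + 1 ≤ sInf H
    apply le_csInf hHne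
    rintro m ⟨T, hT, rfl⟩
    set S0 : Finset V := T.preimage Sum.inl (Sum.inl_injective.injOn) with hS0def
    have hmemS0 : ∀ a : V, a ∈ S0 ↔ Sum.inl a ∈ T := fun a => Finset.mem_preimage
    have hcov : ∀ a b : V, G.Adj a b → s(a, b) ≠ s(u, v) → ∃ w ∈ S0, w ∈ s(a, b) := by
      intro a b hab hne
      obtain ⟨w, hwT, hw⟩ := hT s(Sum.inl a, Sum.inl b)
        ((SimpleGraph.mem_edgeSet _).2 ((adj_ll G u v).2 ⟨hab, hne⟩))
      rw [Sym2.mem_iff] at hw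
      rcases hw with h | h
      · subst h; exact ⟨a, (hmemS0 a).2 hwT, by simp⟩
      · subst h; exact ⟨b, (hmemS0 b).2 hwT, by simp⟩
    have himg : S0.image Sum.inl ⊆ T := by
      intro x hx
      simp only [Finset.mem_image] at hx
      obtain ⟨a, ha, rfl⟩ := hx
      exact (hmemS0 a).1 ha
    have hcardS0 : (S0.image (Sum.inl : V → V ⊕ Fin 2)).card = S0.card :=
      Finset.card_image_of_injective _ Sum.inl_injective
    by_cases h0 : (Sum.inr 0 : V ⊕ Fin 2) ∈ T
    · by_cases h1 : (Sum.inr 1 : V ⊕ Fin 2) ∈ T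
      · -- both: S = insert u S0
        have hcoverG : IsVCover G (insert u S0) := by
          intro e he
          induction e using Sym2.ind with
          | _ a b =>
            by_cases hne : s(a, b) = s(u, v)
            · exact ⟨u, Finset.mem_insert_self u S0, hne ▸ Sym2.mem_mk_left u v⟩
            · obtain ⟨w, hwS, hw⟩ := hcov a b ((SimpleGraph.mem_edgeSet _).1 he) hne
              exact ⟨w, Finset.mem_insert_of_mem hwS, hw⟩
        have h2 : insert (Sum.inr 0 : V ⊕ Fin 2) (insert (Sum.inr 1) (S0.image Sum.inl)) ⊆ T := by
          intro x hx
          rcases Finset.mem_insert.1 hx with rfl | hx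
          · exact h0
          rcases Finset.mem_insert.1 hx with rfl | hx
          · exact h1
          · exact himg hx
        have hle : S0.card + 2 ≤ T.card := by
          have := Finset.card_le_card h2
          rwa [Finset.card_insert_of_notMem (by simp),
            Finset.card_insert_of_notMem (by simp), hcardS0] at this
        have hk : sInf {m : ℕ | ∃ S : Finset V, IsVCover G S ∧ S.card = m}
            ≤ (insert u S0).card :=
          Nat.sInf_le ⟨insert u S0, hcoverG, rfl⟩
        have hins : (insert u S0).card ≤ S0.card + 1 := Finset.card_insert_le u S0
        omega
      · -- inr 0 ∈ T, inr 1 ∉ T : v ∈ S0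
        have hvS0 : v ∈ S0 := by
          obtain ⟨w, hwT, hw⟩ := hT s(Sum.inl v, Sum.inr 1)
            ((SimpleGraph.mem_edgeSet _).2 ((adj_lr G u v).2 (Or.inr ⟨rfl, rfl⟩)))
          rw [Sym2.mem_iff] at hw
          rcases hw with rfl | rfl
          · exact (hmemS0 v).2 hwT
          · exact absurd hwT h1
        have hcoverG : IsVCover G S0 := by
          intro e he
          induction e using Sym2.ind with
          | _ a b =>
            by_cases hne : s(a, b) = s(u, v)
            · exact ⟨v, hvS0, hne ▸ Sym2.mem_mk_right u v⟩
            · exact hcov a b ((SimpleGraph.mem_edgeSet _).1 he) hne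
        have h2 : insert (Sum.inr 0 : V ⊕ Fin 2) (S0.image Sum.inl) ⊆ T := by
          intro x hx
          rcases Finset.mem_insert.1 hx with rfl | hx
          · exact h0
          · exact himg hx
        have hle : S0.card + 1 ≤ T.card := by
          have := Finset.card_le_card h2
          rwa [Finset.card_insert_of_notMem (by simp), hcardS0] at this
        have hk : sInf {m : ℕ | ∃ S : Finset V, IsVCover G S ∧ S.card = m} ≤ S0.card :=
          Nat.sInf_le ⟨S0, hcoverG, rfl⟩
        omega
    · -- inr 0 ∉ T : inr 1 ∈ T (from edge u'v'), u ∈ S0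
      have h1 : (Sum.inr 1 : V ⊕ Fin 2) ∈ T := by
        obtain ⟨w, hwT, hw⟩ := hT s(Sum.inr 0, Sum.inr 1)
          ((SimpleGraph.mem_edgeSet _).2 ((adj_rr G u v).2 (Or.inl ⟨rfl, rfl⟩)))
        rw [Sym2.mem_iff] at hw
        rcases hw with rfl | rfl
        · exact absurd hwT h0
        · exact hwT
      have huS0 : u ∈ S0 := by
        obtain ⟨w, hwT, hw⟩ := hT s(Sum.inl u, Sum.inr 0)
          ((SimpleGraph.mem_edgeSet _).2 ((adj_lr G u v).2 (Or.inl ⟨rfl, rfl⟩)))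
        rw [Sym2.mem_iff] at hw
        rcases hw with rfl | rfl
        · exact (hmemS0 u).2 hwT
        · exact absurd hwT h0
      have hcoverG : IsVCover G S0 := by
        intro e he
        induction e using Sym2.ind with
        | _ a b =>
          by_cases hne : s(a, b) = s(u, v)
          · exact ⟨u, huS0, hne ▸ Sym2.mem_mk_left u v⟩
          · exact hcov a b ((SimpleGraph.mem_edgeSet _).1 he) hne
      have h2 : insert (Sum.inr 1 : V ⊕ Fin 2) (S0.image Sum.inl) ⊆ T := by
        intro x hx
        rcases Finset.mem_insert.1 hx with rfl | hx
        · exact h1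
        · exact himg hx
      have hle : S0.card + 1 ≤ T.card := by
        have := Finset.card_le_card h2
        rwa [Finset.card_insert_of_notMem (by simp), hcardS0] at this
      have hk : sInf {m : ℕ | ∃ S : Finset V, IsVCover G S ∧ S.card = m} ≤ S0.card :=
        Nat.sInf_le ⟨S0, hcoverG, rfl⟩
      omega
end

section
/- Let H be a finite simple graph and let v be a vertex of H of degree exactly 4 with neighbors w₁, w₂, w₃, w₄. Let G be the graph obtained from H by deleting v, adding three new vertices v_a, v_b, v_c with edges v_a v_b and v_b v_c, and adding the edges (v_a, w₁), (v_a, w₂), (v_c, w₃), (v_c, w₄). Then the minimum size of a vertex cover of G equals the minimum size of a vertex cover of H plus 1. -/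
/-- The graph obtained from `H` by splitting the degree-4 vertex `v` with neighbors
`w₁, w₂, w₃, w₄`: the vertex `v` is deleted (the remaining vertices are the subtype
`{x // x ≠ v}`), three new vertices `v_a = inr 0`, `v_b = inr 1`, `v_c = inr 2` are
added with the path edges `v_a—v_b`, `v_b—v_c`, and the edges
`(v_a, w₁), (v_a, w₂), (v_c, w₃), (v_c, w₄)`. -/
def vertexSplit {V : Type*} [DecidableEq V] (H : SimpleGraph V)
    (v w₁ w₂ w₃ w₄ : V) :
    SimpleGraph ({x : V // x ≠ v} ⊕ Fin 3) :=
  SimpleGraph.fromRel (fun x y =>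
    match x, y with
    | Sum.inl a, Sum.inl b => H.Adj a.1 b.1
    | Sum.inl a, Sum.inr i =>
        (i = 0 ∧ (a.1 = w₁ ∨ a.1 = w₂)) ∨ (i = 2 ∧ (a.1 = w₃ ∨ a.1 = w₄))
    | Sum.inr i, Sum.inr j => (i = 0 ∧ j = 1) ∨ (i = 1 ∧ j = 2)
    | Sum.inr _, Sum.inl _ => False)

lemma isVCover_iff {W : Type*} (G : SimpleGraph W) (S : Finset W) :
    IsVCover G S ↔ ∀ x y, G.Adj x y → x ∈ S ∨ y ∈ S := by
  constructor
  · intro h x y hxy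
    obtain ⟨w, hw, hmem⟩ := h s(x, y) hxy
    rcases Sym2.mem_iff.1 hmem with rfl | rfl
    · exact Or.inl hw
    · exact Or.inr hw
  · intro h e he
    induction e using Sym2.ind with
    | _ x y =>
      rw [SimpleGraph.mem_edgeSet] at he
      rcases h x y he with hx | hy
      · exact ⟨x, hx, Sym2.mem_mk_left x y⟩
      · exact ⟨y, hy, Sym2.mem_mk_right x y⟩

/-- if `v` has degree exactly 4 in `H`, with (distinct) neighbors
`w₁, w₂, w₃, w₄`, then the minimum size of a vertex cover of the split graph `G`
equals the minimum size of a vertex cover of `H` plus 1. -/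
theorem vertexSplit_minVC {V : Type*} [Fintype V] [DecidableEq V]
    (H : SimpleGraph V) (v w₁ w₂ w₃ w₄ : V)
    (hdistinct : w₁ ≠ w₂ ∧ w₁ ≠ w₃ ∧ w₁ ≠ w₄ ∧ w₂ ≠ w₃ ∧ w₂ ≠ w₄ ∧ w₃ ≠ w₄)
    (hnbrs : H.neighborSet v = {w₁, w₂, w₃, w₄}) :
    sInf {m : ℕ | ∃ S : Finset ({x : V // x ≠ v} ⊕ Fin 3),
        IsVCover (vertexSplit H v w₁ w₂ w₃ w₄) S ∧ S.card = m}
      = sInf {m : ℕ | ∃ S : Finset V, IsVCover H S ∧ S.card = m} + 1 := by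
  classical
  set G := vertexSplit H v w₁ w₂ w₃ w₄ with hGdef
  have hw : ∀ w, H.Adj v w ↔ (w = w₁ ∨ w = w₂ ∨ w = w₃ ∨ w = w₄) := by
    intro w
    have := Set.ext_iff.1 hnbrs w
    simpa [SimpleGraph.mem_neighborSet] using this
  have hw1v : w₁ ≠ v := fun h => H.irrefl (h ▸ (hw w₁).2 (by tauto))
  have hw2v : w₂ ≠ v := fun h => H.irrefl (h ▸ (hw w₂).2 (by tauto))
  have hw3v : w₃ ≠ v := fun h => H.irrefl (h ▸ (hw w₃).2 (by tauto))
  have hw4v : w₄ ≠ v := fun h => H.irrefl (h ▸ (hw w₄).2 (by tauto))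
  -- adjacency characterizations
  have adj_ll : ∀ (a b : {x : V // x ≠ v}), G.Adj (Sum.inl a) (Sum.inl b) ↔ H.Adj a.1 b.1 := by
    intro a b
    rw [hGdef]
    simp only [vertexSplit, SimpleGraph.fromRel_adj]
    constructor
    · rintro ⟨-, h | h⟩
      · exact h
      · exact h.symm
    · intro h
      refine ⟨?_, Or.inl h⟩
      intro hab
      exact H.irrefl (by rw [Sum.inl.injEq] at hab; rw [hab] at h; exact h)
  have adj_lr : ∀ (a : {x : V // x ≠ v}) (i : Fin 3), G.Adj (Sum.inl a) (Sum.inr i) ↔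
      ((i = 0 ∧ (a.1 = w₁ ∨ a.1 = w₂)) ∨ (i = 2 ∧ (a.1 = w₃ ∨ a.1 = w₄))) := by
    intro a i
    rw [hGdef]
    simp only [vertexSplit, SimpleGraph.fromRel_adj]
    constructor
    · rintro ⟨-, h | h⟩
      · exact h
      · exact h.elim
    · intro h
      exact ⟨by simp, Or.inl h⟩
  have adj_rr : ∀ (i j : Fin 3), G.Adj (Sum.inr i) (Sum.inr j) ↔
      ((i = 0 ∧ j = 1) ∨ (i = 1 ∧ j = 2) ∨ (j = 0 ∧ i = 1) ∨ (j = 1 ∧ i = 2)) := by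
    intro i j
    rw [hGdef]
    simp only [vertexSplit, SimpleGraph.fromRel_adj]
    constructor
    · rintro ⟨-, h | h⟩
      · tauto
      · tauto
    · intro h
      refine ⟨?_, by tauto⟩
      intro hij
      rw [Sum.inr.injEq] at hij
      subst hij
      rcases h with ⟨h1, h2⟩ | ⟨h1, h2⟩ | ⟨h1, h2⟩ | ⟨h1, h2⟩ <;> (rw [h1] at h2; exact absurd h2 (by decide))
  have adj_rl : ∀ (i : Fin 3) (a : {x : V // x ≠ v}), G.Adj (Sum.inr i) (Sum.inl a) ↔
      ((i = 0 ∧ (a.1 = w₁ ∨ a.1 = w₂)) ∨ (i = 2 ∧ (a.1 = w₃ ∨ a.1 = w₄))) := by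
    intro i a
    rw [G.adj_comm]
    exact adj_lr a i
  -- nonemptiness of the two size sets
  have hBne : {m : ℕ | ∃ S : Finset V, IsVCover H S ∧ S.card = m}.Nonempty := by
    refine ⟨Finset.univ.card, Finset.univ, ?_, rfl⟩
    rw [isVCover_iff]
    intro x y _
    exact Or.inl (Finset.mem_univ x)
  have hAne : {m : ℕ | ∃ S : Finset ({x : V // x ≠ v} ⊕ Fin 3),
      IsVCover G S ∧ S.card = m}.Nonempty := by
    refine ⟨Finset.univ.card, Finset.univ, ?_, rfl⟩
    rw [isVCover_iff]
    intro x y _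
    exact Or.inl (Finset.mem_univ x)
  apply le_antisymm
  · -- min(G) ≤ min(H) + 1
    obtain ⟨S, hS, hScard⟩ := Nat.sInf_mem hBne
    rw [isVCover_iff] at hS
    by_cases hv : v ∈ S
    · -- use (S \ {v}) ∪ {v_a, v_c}
      set T : Finset ({x : V // x ≠ v} ⊕ Fin 3) :=
        ((S.erase v).subtype (· ≠ v)).map ⟨Sum.inl, Sum.inl_injective⟩ ∪
          {Sum.inr 0, Sum.inr 2} with hTdef
      have hmemT : ∀ (a : {x : V // x ≠ v}), a.1 ∈ S → Sum.inl a ∈ T := by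
        intro a ha
        rw [hTdef]
        apply Finset.mem_union_left
        rw [Finset.mem_map]
        exact ⟨a, by simp [Finset.mem_subtype, Finset.mem_erase, a.2, ha], rfl⟩
      have hTcov : IsVCover G T := by
        rw [isVCover_iff]
        rintro (a | i) (b | j) hadj
        · rw [adj_ll] at hadj
          rcases hS _ _ hadj with h | h
          · exact Or.inl (hmemT a h)
          · exact Or.inr (hmemT b h)
        · rw [adj_lr] at hadj
          right
          rw [hTdef]
          apply Finset.mem_union_right
          rcases hadj with ⟨h, -⟩ | ⟨h, -⟩ <;> simp [h]
        · rw [adj_rl] at hadj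
          left
          rw [hTdef]
          apply Finset.mem_union_right
          rcases hadj with ⟨h, -⟩ | ⟨h, -⟩ <;> simp [h]
        · rw [adj_rr] at hadj
          rw [hTdef]
          rcases hadj with ⟨h1, h2⟩ | ⟨h1, h2⟩ | ⟨h1, h2⟩ | ⟨h1, h2⟩
          · exact Or.inl (Finset.mem_union_right _ (by simp [h1]))
          · exact Or.inr (Finset.mem_union_right _ (by simp [h2]))
          · exact Or.inr (Finset.mem_union_right _ (by simp [h1]))
          · exact Or.inl (Finset.mem_union_right _ (by simp [h2]))
      have hTcard : T.card ≤ S.card + 1 := by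
        have h1 : T.card ≤ ((S.erase v).subtype (· ≠ v)).card + 2 := by
          refine le_trans (Finset.card_union_le _ _) ?_
          have : ({Sum.inr 0, Sum.inr 2} : Finset ({x : V // x ≠ v} ⊕ Fin 3)).card ≤ 2 :=
            Finset.card_le_two
          simp only [Finset.card_map]
          omega
        have h2 : ((S.erase v).subtype (· ≠ v)).card ≤ (S.erase v).card := by
          rw [Finset.card_subtype]
          exact Finset.card_filter_le _ _
        have h3 : (S.erase v).card = S.card - 1 := Finset.card_erase_of_mem hv
        have h4 : 1 ≤ S.card := Finset.card_pos.2 ⟨v, hv⟩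
        omega
      calc sInf {m : ℕ | ∃ S : Finset ({x : V // x ≠ v} ⊕ Fin 3),
            IsVCover G S ∧ S.card = m} ≤ T.card := Nat.sInf_le ⟨T, hTcov, rfl⟩
        _ ≤ S.card + 1 := hTcard
        _ = _ + 1 := by rw [hScard]
    · -- v ∉ S : all wᵢ ∈ S ; use S ∪ {v_b}
      set T : Finset ({x : V // x ≠ v} ⊕ Fin 3) :=
        (S.subtype (· ≠ v)).map ⟨Sum.inl, Sum.inl_injective⟩ ∪ {Sum.inr 1} with hTdef
      have hmemT : ∀ (a : {x : V // x ≠ v}), a.1 ∈ S → Sum.inl a ∈ T := by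
        intro a ha
        rw [hTdef]
        apply Finset.mem_union_left
        rw [Finset.mem_map]
        exact ⟨a, by simp [Finset.mem_subtype, ha], rfl⟩
      have hwS : ∀ w, H.Adj v w → w ∈ S := by
        intro w hvw
        rcases hS v w hvw with h | h
        · exact absurd h hv
        · exact h
      have hTcov : IsVCover G T := by
        rw [isVCover_iff]
        rintro (a | i) (b | j) hadj
        · rw [adj_ll] at hadj
          rcases hS _ _ hadj with h | h
          · exact Or.inl (hmemT a h)
          · exact Or.inr (hmemT b h)
        · rw [adj_lr] at hadj
          left
          apply hmemT
          apply hwS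
          rw [hw]
          tauto
        · rw [adj_rl] at hadj
          right
          apply hmemT
          apply hwS
          rw [hw]
          tauto
        · rw [adj_rr] at hadj
          rw [hTdef]
          rcases hadj with ⟨h1, h2⟩ | ⟨h1, h2⟩ | ⟨h1, h2⟩ | ⟨h1, h2⟩
          · exact Or.inr (Finset.mem_union_right _ (by simp [h2]))
          · exact Or.inl (Finset.mem_union_right _ (by simp [h1]))
          · exact Or.inl (Finset.mem_union_right _ (by simp [h2]))
          · exact Or.inr (Finset.mem_union_right _ (by simp [h1]))
      have hTcard : T.card ≤ S.card + 1 := by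
        refine le_trans (Finset.card_union_le _ _) ?_
        simp only [Finset.card_map, Finset.card_singleton, Finset.card_subtype]
        have := Finset.card_filter_le S (· ≠ v)
        omega
      calc sInf {m : ℕ | ∃ S : Finset ({x : V // x ≠ v} ⊕ Fin 3),
            IsVCover G S ∧ S.card = m} ≤ T.card := Nat.sInf_le ⟨T, hTcov, rfl⟩
        _ ≤ S.card + 1 := hTcard
        _ = _ + 1 := by rw [hScard]
  · -- min(H) + 1 ≤ min(G)
    obtain ⟨T, hT, hTcard⟩ := Nat.sInf_mem hAne
    rw [isVCover_iff] at hT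
    set f : ({x : V // x ≠ v} ⊕ Fin 3) → V := Sum.elim Subtype.val (fun _ => v) with hfdef
    -- the path edges force some inr in T
    have hpath01 : Sum.inr 0 ∈ T ∨ Sum.inr 1 ∈ T :=
      hT _ _ ((adj_rr 0 1).2 (Or.inl ⟨rfl, rfl⟩))
    have hpath12 : Sum.inr 1 ∈ T ∨ Sum.inr 2 ∈ T :=
      hT _ _ ((adj_rr 1 2).2 (Or.inr (Or.inl ⟨rfl, rfl⟩)))
    -- general: if two distinct inr's in T, use image ∪ nothing; need lemma
    have key : ∃ S : Finset V, IsVCover H S ∧ S.card + 1 ≤ T.card := by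
      by_cases h02 : (Sum.inr 0 ∈ T ∧ Sum.inr 1 ∈ T) ∨ (Sum.inr 0 ∈ T ∧ Sum.inr 2 ∈ T) ∨
          (Sum.inr 1 ∈ T ∧ Sum.inr 2 ∈ T)
      · -- at least two inr's: S = T.image f (contains v)
        obtain ⟨i, j, hi, hj, hij⟩ : ∃ i j : Fin 3, Sum.inr i ∈ T ∧ Sum.inr j ∈ T ∧
            (Sum.inr i : {x : V // x ≠ v} ⊕ Fin 3) ≠ Sum.inr j := by
          rcases h02 with ⟨h1, h2⟩ | ⟨h1, h2⟩ | ⟨h1, h2⟩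
          · exact ⟨0, 1, h1, h2, by simp⟩
          · exact ⟨0, 2, h1, h2, by simp⟩
          · exact ⟨1, 2, h1, h2, by simp⟩
        refine ⟨T.image f, ?_, ?_⟩
        · rw [isVCover_iff]
          intro x y hxy
          have hvmem : v ∈ T.image f := Finset.mem_image.2 ⟨Sum.inr i, hi, rfl⟩
          by_cases hx : x = v
          · exact Or.inl (hx ▸ hvmem)
          · by_cases hy : y = v
            · exact Or.inr (hy ▸ hvmem)
            · have : G.Adj (Sum.inl ⟨x, hx⟩) (Sum.inl ⟨y, hy⟩) := (adj_ll _ _).2 hxy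
              rcases hT _ _ this with h | h
              · exact Or.inl (Finset.mem_image.2 ⟨_, h, rfl⟩)
              · exact Or.inr (Finset.mem_image.2 ⟨_, h, rfl⟩)
        · -- card: image collapses the two inr's
          have himg : T.image f = (T.erase (Sum.inr i)).image f := by
            apply Finset.Subset.antisymm
            · intro x hx
              rw [Finset.mem_image] at hx ⊢
              obtain ⟨t, ht, rfl⟩ := hx
              by_cases hti : t = Sum.inr i
              · exact ⟨Sum.inr j, Finset.mem_erase.2 ⟨fun h => hij h.symm, hj⟩, by subst hti; rfl⟩
              · exact ⟨t, Finset.mem_erase.2 ⟨hti, ht⟩, rfl⟩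
            · exact Finset.image_subset_image (Finset.erase_subset _ _)
          have h1 : (T.image f).card ≤ (T.erase (Sum.inr i)).card := by
            rw [himg]; exact Finset.card_image_le
          have h2 : (T.erase (Sum.inr i)).card = T.card - 1 := Finset.card_erase_of_mem hi
          have h3 : 1 ≤ T.card := Finset.card_pos.2 ⟨_, hi⟩
          omega
      · -- exactly one inr, namely inr 1; then w₁..w₄ all in T as inl's
        push_neg at h02
        have h1T : Sum.inr 1 ∈ T := by
          rcases hpath01 with h0 | h1
          · rcases hpath12 with h1 | h2
            · exact h1
            · exact absurd h2 (h02.2.1 h0)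
          · exact h1
        have h0T : Sum.inr 0 ∉ T := fun h => (h02.1 h) h1T
        have h2T : Sum.inr 2 ∉ T := fun h => (h02.2.2 h1T) h
        have hw1T : Sum.inl ⟨w₁, hw1v⟩ ∈ T := by
          rcases hT _ _ ((adj_lr ⟨w₁, hw1v⟩ 0).2 (Or.inl ⟨rfl, Or.inl rfl⟩)) with h | h
          · exact h
          · exact absurd h h0T
        have hw2T : Sum.inl ⟨w₂, hw2v⟩ ∈ T := by
          rcases hT _ _ ((adj_lr ⟨w₂, hw2v⟩ 0).2 (Or.inl ⟨rfl, Or.inr rfl⟩)) with h | h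
          · exact h
          · exact absurd h h0T
        have hw3T : Sum.inl ⟨w₃, hw3v⟩ ∈ T := by
          rcases hT _ _ ((adj_lr ⟨w₃, hw3v⟩ 2).2 (Or.inr ⟨rfl, Or.inl rfl⟩)) with h | h
          · exact h
          · exact absurd h h2T
        have hw4T : Sum.inl ⟨w₄, hw4v⟩ ∈ T := by
          rcases hT _ _ ((adj_lr ⟨w₄, hw4v⟩ 2).2 (Or.inr ⟨rfl, Or.inr rfl⟩)) with h | h
          · exact h
          · exact absurd h h2T
        refine ⟨(T.image f).erase v, ?_, ?_⟩
        · rw [isVCover_iff]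
          intro x y hxy
          have hmemS : ∀ (a : {x : V // x ≠ v}), Sum.inl a ∈ T → a.1 ∈ (T.image f).erase v :=
            fun a ha => Finset.mem_erase.2 ⟨a.2, Finset.mem_image.2 ⟨_, ha, rfl⟩⟩
          by_cases hx : x = v
          · -- y is a neighbor of v
            subst hx
            right
            have : y = w₁ ∨ y = w₂ ∨ y = w₃ ∨ y = w₄ := (hw y).1 hxy
            rcases this with rfl | rfl | rfl | rfl
            · exact hmemS _ hw1T
            · exact hmemS _ hw2T
            · exact hmemS _ hw3T
            · exact hmemS _ hw4T
          · by_cases hy : y = v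
            · subst hy
              left
              have : x = w₁ ∨ x = w₂ ∨ x = w₃ ∨ x = w₄ := (hw x).1 hxy.symm
              rcases this with rfl | rfl | rfl | rfl
              · exact hmemS _ hw1T
              · exact hmemS _ hw2T
              · exact hmemS _ hw3T
              · exact hmemS _ hw4T
            · have : G.Adj (Sum.inl ⟨x, hx⟩) (Sum.inl ⟨y, hy⟩) := (adj_ll _ _).2 hxy
              rcases hT _ _ this with h | h
              · exact Or.inl (hmemS _ h)
              · exact Or.inr (hmemS _ h)
        · have hvmem : v ∈ T.image f := Finset.mem_image.2 ⟨Sum.inr 1, h1T, rfl⟩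
          have h1 : ((T.image f).erase v).card = (T.image f).card - 1 :=
            Finset.card_erase_of_mem hvmem
          have h2 : (T.image f).card ≤ T.card := Finset.card_image_le
          have h3 : 1 ≤ (T.image f).card := Finset.card_pos.2 ⟨v, hvmem⟩
          omega
    obtain ⟨S, hScov, hScard⟩ := key
    have hmem : S.card ∈ {m : ℕ | ∃ S : Finset V, IsVCover H S ∧ S.card = m} :=
      ⟨S, hScov, rfl⟩
    have := Nat.sInf_le hmem
    omega
end
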